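/- Let ℂ[x_1,...,x_n] be graded by a pointed d × n integer matrix A of rank d with ℤA = ℤ^d, and let p be an A-graded prime ideal such that ℂ[x]/p is toral (has bounded Hilbert function). Then p is a binomial ideal. -/

import Mathlib

open MvPolynomial

/-- The `A`-degree of a monomial exponent `u ∈ ℕ^n`, namely `Au ∈ ℤ^d`. -/
def Adeg {d n : ℕ} (A : Matrix (Fin d) (Fin n) ℤ) (u : Fin n →₀ ℕ) : Fin d → ℤ :=
  A.mulVec fun i => (u i : ℤ)

/-- An ideal is `A`-graded if it contains each `A`-homogeneous component of
each of its elements. -/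
def AGraded {d n : ℕ} (A : Matrix (Fin d) (Fin n) ℤ)
    (I : Ideal (MvPolynomial (Fin n) ℂ)) : Prop :=
  ∀ f ∈ I, ∀ α : Fin d → ℤ,
    ((f.support.filter fun u => Adeg A u = α).sum
      fun u => monomial u (f.coeff u)) ∈ I

/-- The degree-`α` graded piece of `ℂ[x]/I` for the `A`-grading. -/
noncomputable def AgradedPiece {d n : ℕ} (A : Matrix (Fin d) (Fin n) ℤ)
    (I : Ideal (MvPolynomial (Fin n) ℂ)) (α : Fin d → ℤ) :
    Submodule ℂ (MvPolynomial (Fin n) ℂ ⧸ I) :=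
  Submodule.span ℂ
    ((Ideal.Quotient.mk I) '' {x | ∃ u : Fin n →₀ ℕ, Adeg A u = α ∧ x = monomial u 1})

/-- A graded ideal `I` is toral if the `A`-graded Hilbert function of
`ℂ[x]/I` is bounded above. -/
def Toral {d n : ℕ} (A : Matrix (Fin d) (Fin n) ℤ)
    (I : Ideal (MvPolynomial (Fin n) ℂ)) : Prop :=
  ∃ C : ℕ, ∀ α : Fin d → ℤ, Module.finrank ℂ (AgradedPiece A I α) ≤ C

lemma Adeg_add {d n : ℕ} (A : Matrix (Fin d) (Fin n) ℤ) (u v : Fin n →₀ ℕ) :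
    Adeg A (u + v) = Adeg A u + Adeg A v := by
  funext i
  simp [Adeg, Matrix.mulVec, dotProduct, Finsupp.add_apply, mul_add,
    Finset.sum_add_distrib]

lemma Adeg_nsmul {d n : ℕ} (A : Matrix (Fin d) (Fin n) ℤ) (k : ℕ) (u : Fin n →₀ ℕ) :
    Adeg A (k • u) = fun i => (k : ℤ) * Adeg A u i := by
  funext i
  simp only [Adeg, Matrix.mulVec, dotProduct, Finsupp.smul_apply, smul_eq_mul,
    Nat.cast_mul, Finset.mul_sum]
  exact Finset.sum_congr rfl fun j _ => by ring

lemma fiber_finite {d n : ℕ} (A : Matrix (Fin d) (Fin n) ℤ)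
    (hpointed : ∃ h : Fin d → ℤ, ∀ j : Fin n, 0 < ∑ i, h i * A i j) (α : Fin d → ℤ) :
    {u : Fin n →₀ ℕ | Adeg A u = α}.Finite := by
  obtain ⟨h, hp⟩ := hpointed
  set B : ℕ := (∑ i, h i * α i).toNat with hB
  have key : ∀ u : Fin n →₀ ℕ, Adeg A u = α → ∀ j, u j ≤ B := by
    intro u hu j
    have hswap : ∑ i, h i * α i = ∑ j', (∑ i, h i * A i j') * (u j' : ℤ) := by
      rw [← hu]
      simp only [Adeg, Matrix.mulVec, dotProduct, Finset.mul_sum, Finset.sum_mul]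
      rw [Finset.sum_comm]
      exact Finset.sum_congr rfl fun j' _ => Finset.sum_congr rfl fun i _ => by ring
    have hle : (u j : ℤ) ≤ ∑ i, h i * α i := by
      rw [hswap]
      calc (u j : ℤ) ≤ (∑ i, h i * A i j) * (u j : ℤ) := by
            nlinarith [hp j, Int.natCast_nonneg (u j)]
        _ ≤ ∑ j', (∑ i, h i * A i j') * (u j' : ℤ) :=
            Finset.single_le_sum
              (f := fun j' => (∑ i, h i * A i j') * (u j' : ℤ))
              (fun j' _ => mul_nonneg (hp j').le (Int.natCast_nonneg _))
              (Finset.mem_univ j)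
    have := Int.toNat_le_toNat hle
    simpa using this
  have hfin : {u : Fin n →₀ ℕ | ∀ j, u j ≤ B}.Finite := by
    have : {u : Fin n →₀ ℕ | ∀ j, u j ≤ B} =
        (Finsupp.equivFunOnFinite (α := Fin n) (M := ℕ)) ⁻¹' (Set.univ.pi fun _ => Set.Iic B) := by
      ext u; simp [Finsupp.equivFunOnFinite, Pi.le_def]
    rw [this]
    exact Set.Finite.preimage (Equiv.injective _).injOn
      (Set.Finite.pi fun _ => Set.finite_Iic B)
  exact hfin.subset fun u hu => key u hu

lemma piece_finiteDim {d n : ℕ} (A : Matrix (Fin d) (Fin n) ℤ)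
    (hpointed : ∃ h : Fin d → ℤ, ∀ j : Fin n, 0 < ∑ i, h i * A i j)
    (I : Ideal (MvPolynomial (Fin n) ℂ)) (α : Fin d → ℤ) :
    Module.Finite ℂ (AgradedPiece A I α) := by
  apply Module.Finite.span_of_finite
  apply Set.Finite.image
  have : {x : MvPolynomial (Fin n) ℂ | ∃ u, Adeg A u = α ∧ x = monomial u 1} =
      (fun u : Fin n →₀ ℕ => (monomial u 1 : MvPolynomial (Fin n) ℂ)) ''
        {u | Adeg A u = α} := by
    ext x; constructor
    · rintro ⟨u, h1, rfl⟩; exact ⟨u, h1, rfl⟩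
    · rintro ⟨u, h1, rfl⟩; exact ⟨u, h1, rfl⟩
  rw [this]
  exact (fiber_finite A hpointed α).image _

/-- In a `ℂ`-algebra domain, the powers `a^k b^(m-k)` are linearly independent
over `ℂ` unless `a` is a `ℂ`-multiple of `b`. -/
lemma powers_linearIndependent {T : Type*} [CommRing T] [IsDomain T] [Algebra ℂ T]
    (a b : T) (hb : b ≠ 0) (hab : ∀ lam : ℂ, a ≠ lam • b) (m : ℕ) :
    LinearIndependent ℂ (fun k : Fin (m + 1) => a ^ (k : ℕ) * b ^ (m - (k : ℕ))) := by
  rw [Fintype.linearIndependent_iff]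
  intro c hc
  by_contra hne
  push_neg at hne
  obtain ⟨k0, hk0⟩ := hne
  let K := FractionRing T
  let φ : T →+* K := algebraMap T K
  have hφ : Function.Injective φ := IsFractionRing.injective T K
  let ψ : ℂ →+* K := φ.comp (algebraMap ℂ T)
  have hψ : Function.Injective ψ := ψ.injective
  have hb' : φ b ≠ 0 := fun h => hb (hφ (by simpa using h))
  set t : K := φ a / φ b with ht
  have h1 : ∑ k : Fin (m + 1), ψ (c k) * t ^ (k : ℕ) = 0 := by
    have h0 : φ (∑ k : Fin (m + 1), c k • (a ^ (k : ℕ) * b ^ (m - (k : ℕ)))) = 0 := by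
      rw [hc, map_zero]
    rw [map_sum] at h0
    have h2 : (∑ k : Fin (m + 1), ψ (c k) * t ^ (k : ℕ)) * φ b ^ m = 0 := by
      rw [Finset.sum_mul, ← h0]
      refine Finset.sum_congr rfl fun k _ => ?_
      have hk : (k : ℕ) ≤ m := Nat.lt_succ_iff.mp k.isLt
      have hpow : φ b ^ m = φ b ^ (k : ℕ) * φ b ^ (m - (k : ℕ)) := by
        rw [← pow_add, Nat.add_sub_cancel' hk]
      rw [Algebra.smul_def, map_mul, map_mul, map_pow, map_pow, hpow, ht, div_pow]
      have : φ (algebraMap ℂ T (c k)) = ψ (c k) := rfl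
      rw [this]
      have hbk : φ b ^ (k : ℕ) ≠ 0 := pow_ne_zero _ hb'
      linear_combination (ψ (c k) * φ a ^ (k : ℕ) * φ b ^ (m - (k : ℕ))) * mul_inv_cancel₀ hbk
    rcases mul_eq_zero.mp h2 with h | h
    · exact h
    · exact absurd h (pow_ne_zero m hb')
  set P : Polynomial ℂ := ∑ k : Fin (m + 1), Polynomial.C (c k) * Polynomial.X ^ (k : ℕ)
    with hPdef
  have hPk : P.coeff (k0 : ℕ) = c k0 := by
    rw [hPdef, Polynomial.finset_sum_coeff]
    rw [Finset.sum_eq_single k0]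
    · simp [Polynomial.coeff_C_mul, Polynomial.coeff_X_pow]
    · intro k _ hk
      rw [Polynomial.coeff_C_mul, Polynomial.coeff_X_pow, if_neg, mul_zero]
      exact fun h => hk (Fin.val_injective h.symm)
    · simp
  have hP0 : P ≠ 0 := fun h => hk0 (by rw [← hPk, h, Polynomial.coeff_zero])
  have heval : Polynomial.eval₂ ψ t P = 0 := by
    rw [hPdef, Polynomial.eval₂_finset_sum]
    rw [← h1]
    refine Finset.sum_congr rfl fun k _ => ?_
    rw [Polynomial.eval₂_mul, Polynomial.eval₂_C, Polynomial.eval₂_X_pow]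
  have hsp := (IsAlgClosed.splits P).eq_prod_roots
  rw [hsp] at heval
  have heval' : (Polynomial.eval₂RingHom ψ t)
      (Polynomial.C P.leadingCoeff * (P.roots.map fun a => Polynomial.X - Polynomial.C a).prod)
      = 0 := heval
  rw [map_mul, map_multiset_prod, Multiset.map_map] at heval'
  have hlead : (Polynomial.eval₂RingHom ψ t) (Polynomial.C P.leadingCoeff) ≠ 0 := by
    simp only [Polynomial.coe_eval₂RingHom, Polynomial.eval₂_C]
    intro h
    exact Polynomial.leadingCoeff_ne_zero.mpr hP0 (hψ (by simpa using h))
  rcases mul_eq_zero.mp heval' with h | h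
  · exact hlead h
  · rw [Multiset.prod_eq_zero_iff] at h
    obtain ⟨r, hr, hr0⟩ := Multiset.mem_map.mp h
    have ht0 : t = ψ r := by
      have : t - ψ r = 0 := by
        simpa [Polynomial.coe_eval₂RingHom] using hr0
      exact sub_eq_zero.mp this
    have : φ a = ψ r * φ b := by
      rw [← ht0, ht, div_mul_cancel₀ _ hb']
    have haeq : a = r • b := by
      apply hφ
      rw [this, Algebra.smul_def, map_mul]
      rfl
    exact hab r haeq

/-- For a toral graded prime, two monomials of the same degree outside `p` are
proportional modulo `p`. -/
lemma exists_lam {d n : ℕ} (A : Matrix (Fin d) (Fin n) ℤ)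
    (hpointed : ∃ h : Fin d → ℤ, ∀ j : Fin n, 0 < ∑ i, h i * A i j)
    (p : Ideal (MvPolynomial (Fin n) ℂ)) (hprime : p.IsPrime) (htoral : Toral A p)
    (u v : Fin n →₀ ℕ) (hα : Adeg A u = Adeg A v)
    (hv : (monomial v 1 : MvPolynomial (Fin n) ℂ) ∉ p) :
    ∃ lam : ℂ, (monomial u 1 - lam • monomial v 1 : MvPolynomial (Fin n) ℂ) ∈ p := by
  haveI := hprime
  by_contra hcon
  push_neg at hcon
  set mk := Ideal.Quotient.mkₐ ℂ p with hmk
  set a := mk (monomial u 1) with hadef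
  set b := mk (monomial v 1) with hbdef
  have hb : b ≠ 0 := fun h => hv (by
    rw [hbdef, hmk] at h
    simpa only [Ideal.Quotient.mkₐ_eq_mk, Ideal.Quotient.eq_zero_iff_mem] using h)
  have hab : ∀ lam : ℂ, a ≠ lam • b := by
    intro lam h
    apply hcon lam
    have h2 : mk (monomial u 1 - lam • monomial v 1) = 0 := by
      rw [map_sub, map_smul, ← hadef, ← hbdef, h, sub_self]
    rw [hmk] at h2
    simpa only [Ideal.Quotient.mkₐ_eq_mk, Ideal.Quotient.eq_zero_iff_mem] using h2
  obtain ⟨C, hC⟩ := htoral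
  have hli := powers_linearIndependent a b hb hab C
  set β : Fin d → ℤ := fun i => (C : ℤ) * Adeg A u i with hβ
  have hmem : ∀ k : Fin (C + 1), a ^ (k : ℕ) * b ^ (C - (k : ℕ)) ∈ AgradedPiece A p β := by
    intro k
    have hk : (k : ℕ) ≤ C := Nat.lt_succ_iff.mp k.isLt
    have hdeg : Adeg A ((k : ℕ) • u + (C - (k : ℕ)) • v) = β := by
      rw [Adeg_add, Adeg_nsmul, Adeg_nsmul, ← hα]
      funext i
      simp only [Pi.add_apply, hβ]
      have hcast : ((k : ℕ) : ℤ) + ((C - (k : ℕ) : ℕ) : ℤ) = (C : ℤ) := by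
        rw [← Nat.cast_add, Nat.add_sub_cancel' hk]
      rw [← add_mul, hcast]
    have heq : a ^ (k : ℕ) * b ^ (C - (k : ℕ)) =
        Ideal.Quotient.mk p (monomial ((k : ℕ) • u + (C - (k : ℕ)) • v) 1) := by
      rw [hadef, hbdef, hmk]
      simp only [Ideal.Quotient.mkₐ_eq_mk, ← map_pow, ← map_mul]
      congr 1
      rw [monomial_pow, monomial_pow, monomial_mul, one_pow, one_pow, one_mul]
    rw [heq]
    exact Submodule.subset_span ⟨_, ⟨_, hdeg, rfl⟩, rfl⟩
  haveI : Module.Finite ℂ (AgradedPiece A p β) := piece_finiteDim A hpointed p β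
  let w : Fin (C + 1) → AgradedPiece A p β := fun k => ⟨_, hmem k⟩
  have hw : LinearIndependent ℂ w := by
    apply LinearIndependent.of_comp (AgradedPiece A p β).subtype
    exact hli
  have hcard := hw.fintype_card_le_finrank
  rw [Fintype.card_fin] at hcard
  have := hC β
  omega

/-- Every `A`-graded toral prime ideal is a binomial ideal. -/
theorem toral_prime_is_binomial {d n : ℕ} (A : Matrix (Fin d) (Fin n) ℤ)
    (hrank : A.rank = d)
    (hpointed : ∃ h : Fin d → ℤ, ∀ j : Fin n, 0 < ∑ i, h i * A i j)
    (hZA : ∀ α : Fin d → ℤ, ∃ c : Fin n → ℤ, A.mulVec c = α)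
    (p : Ideal (MvPolynomial (Fin n) ℂ))
    (hprime : p.IsPrime) (hgraded : AGraded A p) (htoral : Toral A p) :
    ∃ S : Set (MvPolynomial (Fin n) ℂ), p = Ideal.span S ∧
      ∀ f ∈ S, ∃ (u v : Fin n →₀ ℕ) (lam : ℂ),
        f = monomial u 1 - lam • monomial v 1 := by
  classical
  set S : Set (MvPolynomial (Fin n) ℂ) :=
    {f | f ∈ p ∧ ∃ (u v : Fin n →₀ ℕ) (lam : ℂ), f = monomial u 1 - lam • monomial v 1}
    with hS
  refine ⟨S, ?_, fun f hf => hf.2⟩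
  refine le_antisymm ?_ (Ideal.span_le.mpr fun f hf => hf.1)
  -- a homogeneous element of p lies in the span of S
  have homog : ∀ g ∈ p, ∀ α : Fin d → ℤ, (∀ w ∈ g.support, Adeg A w = α) →
      g ∈ Ideal.span S := by
    intro g hg α hhom
    by_cases hall : ∀ w ∈ g.support, (monomial w 1 : MvPolynomial (Fin n) ℂ) ∈ p
    · rw [g.as_sum]
      apply Ideal.sum_mem
      intro w hw
      have hmono : (monomial w (coeff w g) : MvPolynomial (Fin n) ℂ) =
          C (coeff w g) * monomial w 1 := by
        rw [C_mul_monomial, mul_one]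
      rw [hmono]
      exact Ideal.mul_mem_left _ _
        (Ideal.subset_span ⟨hall w hw, w, w, 0, by simp⟩)
    · push_neg at hall
      obtain ⟨u₀, hu₀s, hu₀⟩ := hall
      have hlam : ∀ w ∈ g.support, ∃ lam : ℂ,
          (monomial w 1 - lam • monomial u₀ 1 : MvPolynomial (Fin n) ℂ) ∈ p := by
        intro w hw
        exact exists_lam A hpointed p hprime htoral w u₀
          (by rw [hhom w hw, hhom u₀ hu₀s]) hu₀
      choose lam hlamp using hlam
      set σ : ℂ := ∑ w ∈ g.support.attach, coeff (w : Fin n →₀ ℕ) g * lam w w.2 with hσdef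
      have key : g - ∑ w ∈ g.support.attach,
          (coeff (w : Fin n →₀ ℕ) g) •
            ((monomial (w : Fin n →₀ ℕ) 1 : MvPolynomial (Fin n) ℂ)
              - lam w w.2 • monomial u₀ 1) = σ • monomial u₀ 1 := by
        have hg' : g = ∑ w ∈ g.support.attach,
            (coeff (w : Fin n →₀ ℕ) g) • (monomial (w : Fin n →₀ ℕ) 1 : MvPolynomial (Fin n) ℂ) := by
          conv_lhs => rw [g.as_sum]
          rw [← Finset.sum_attach g.support (fun w => (monomial w (coeff w g) : MvPolynomial (Fin n) ℂ))]
          refine Finset.sum_congr rfl fun w _ => ?_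
          rw [smul_monomial, smul_eq_mul, mul_one]
        have hsum : ∑ w ∈ g.support.attach,
            (coeff (w : Fin n →₀ ℕ) g) •
              ((monomial (w : Fin n →₀ ℕ) 1 : MvPolynomial (Fin n) ℂ)
                - lam w w.2 • monomial u₀ 1) =
            (∑ w ∈ g.support.attach,
              (coeff (w : Fin n →₀ ℕ) g) • (monomial (w : Fin n →₀ ℕ) 1 : MvPolynomial (Fin n) ℂ))
            - ∑ w ∈ g.support.attach,
              (coeff (w : Fin n →₀ ℕ) g * lam w w.2) • (monomial u₀ 1 : MvPolynomial (Fin n) ℂ) := by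
          rw [← Finset.sum_sub_distrib]
          exact Finset.sum_congr rfl fun w _ => by rw [smul_sub, smul_smul]
        rw [hsum, ← hg', sub_sub_cancel, hσdef, Finset.sum_smul]
      have hmemp : σ • (monomial u₀ 1 : MvPolynomial (Fin n) ℂ) ∈ p := by
        rw [← key]
        apply Ideal.sub_mem _ hg
        apply Ideal.sum_mem
        intro w hw
        rw [smul_eq_C_mul]
        exact Ideal.mul_mem_left _ _ (hlamp w w.2)
      have hσ0 : σ = 0 := by
        by_contra hσ
        apply hu₀
        have hrw : (monomial u₀ 1 : MvPolynomial (Fin n) ℂ) =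
            C σ⁻¹ * (σ • monomial u₀ 1) := by
          rw [smul_eq_C_mul, ← mul_assoc, ← C_mul, inv_mul_cancel₀ hσ, C_1, one_mul]
        rw [hrw]
        exact Ideal.mul_mem_left _ _ hmemp
      have hfin : g = ∑ w ∈ g.support.attach,
          (coeff (w : Fin n →₀ ℕ) g) •
            ((monomial (w : Fin n →₀ ℕ) 1 : MvPolynomial (Fin n) ℂ)
              - lam w w.2 • monomial u₀ 1) := by
        have h := key
        rw [hσ0, zero_smul, sub_eq_zero] at h
        exact h
      rw [hfin]
      apply Ideal.sum_mem
      intro w hw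
      rw [smul_eq_C_mul]
      exact Ideal.mul_mem_left _ _
        (Ideal.subset_span ⟨hlamp w w.2, _, _, _, rfl⟩)
  intro f hf
  have hdecomp : f = ∑ α ∈ f.support.image (Adeg A),
      (f.support.filter fun u => Adeg A u = α).sum fun u => monomial u (f.coeff u) := by
    conv_lhs => rw [f.as_sum]
    rw [Finset.sum_fiberwise_of_maps_to (fun u hu => Finset.mem_image_of_mem _ hu)]
  rw [hdecomp]
  apply Ideal.sum_mem
  intro α hα
  apply homog _ (hgraded f hf α) α
  intro w hw
  by_contra hne
  have : coeff w ((f.support.filter fun u => Adeg A u = α).sum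
      fun u => monomial u (f.coeff u)) = 0 := by
    rw [coeff_sum]
    apply Finset.sum_eq_zero
    intro u hu
    rw [coeff_monomial, if_neg]
    rintro rfl
    exact hne (Finset.mem_filter.mp hu).2
  exact (MvPolynomial.mem_support_iff.mp hw) this
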